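/- Let J = J_q × J'_q be a finite nilpotent group (J_q the Sylow q-subgroup, J'_q the Hall q'-subgroup) acting on a finite q-group N by automorphisms, and let φ : J_q → N be a crossed homomorphism whose class is fixed by the J'_q-action. Then the map φ̃ : J → N defined by φ̃(j' j) = φ(j) for j ∈ J_q, j' ∈ J'_q (up to replacing φ by a cohomologous map) is a crossed homomorphism J → N extending a representative of the class of φ; in particular, the restriction res : H¹(J, N) → H¹(J_q, N)^{J'_q} is surjective. -/

import Mathlib

section

variable {N J : Type*} [Group N] [Group J] (φ : J →* MulAut N)

/-- Crossed homomorphism property. -/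
def IsCocycle (f : J → N) : Prop := ∀ j j', f (j * j') = f j * φ j (f j')

/-- The cohomology relation. -/
def Cohomologous (f g : J → N) : Prop :=
  ∃ n : N, ∀ j, g j = n⁻¹ * f j * φ j n

end

open Subgroup
open scoped Pointwise
open scoped IsMulCommutative commutatorElement

universe u v

section AuxLemmas

lemma aux_commutator_ne_top (G : Type u) [Group G] [hs : Group.IsSolvable G] [Nontrivial G] :
    commutator G ≠ ⊤ := by
  intro h
  have key : ∀ n, derivedSeries G n = ⊤ := by
    intro n
    induction n with
    | zero => rfl
    | succ n ih => rw [derivedSeries_succ, ih, ← commutator_def, h]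
  obtain ⟨n, hn⟩ := hs.solvable
  exact top_ne_bot ((key n).symm.trans hn)

lemma aux_card_subgroupOf {G : Type u} [Group G] {X P : Subgroup G} (h : X ≤ P) :
    Nat.card (X.subgroupOf P) = Nat.card X :=
  Nat.card_congr (Subgroup.subgroupOfEquivOfLe h).toEquiv

lemma aux_eq_of_le_of_card_le {G : Type u} [Group G] [Finite G] {K S : Subgroup G}
    (h : K ≤ S) (hc : Nat.card S ≤ Nat.card K) : S = K := by
  have hK : Nat.card ((K : Set G)) = Nat.card K := rfl
  apply SetLike.coe_injective
  refine (Set.eq_of_subset_of_ncard_le h ?_ (Set.toFinite _)).symm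
  rwa [← Nat.card_coe_set_eq, ← Nat.card_coe_set_eq]

end AuxLemmas

lemma abelian_key {G : Type u} [Group G] [Finite G]
    {H K : Subgroup G} [H.Normal] [IsMulCommutative H]
    (hcop : Nat.Coprime (Nat.card H) H.index) (hK : IsComplement' H K) :
    ∃ α : H.QuotientDiff, MulAction.stabilizer G α = K := by
  classical
  obtain ⟨α₀⟩ : Nonempty H.QuotientDiff := inferInstance
  have hfree : ∀ h : H, (h : G) • α₀ = α₀ → h = 1 := fun h hh =>
    Subgroup.eq_one_of_smul_eq_one hcop α₀ h (by rwa [Subgroup.smul_def])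
  have hex : ∀ g : G, ∃ h : H, (h : G) • α₀ = g • α₀ := fun g => by
    obtain ⟨h, hh⟩ := Subgroup.exists_smul_eq hcop α₀ (g • α₀)
    exact ⟨h, by rwa [Subgroup.smul_def] at hh⟩
  choose ψ hψ using fun k : K => hex (k : G)
  have huniq : ∀ h h' : H, (h : G) • α₀ = (h' : G) • α₀ → h = h' := by
    intro h h' he
    have h2 : ((h'⁻¹ * h : H) : G) • α₀ = α₀ := by
      rw [Subgroup.coe_mul, Subgroup.coe_inv, mul_smul, he, inv_smul_smul]
    have h3 := hfree _ h2
    exact (inv_mul_eq_one.mp h3).symm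
  have conj_mem : ∀ (g : G) (h : H), g * (h : G) * g⁻¹ ∈ H := fun g h =>
    (‹H.Normal› : H.Normal).conj_mem (h : G) h.2 g
  let ϕ : G → (H →* H) := fun g =>
    { toFun := fun h => ⟨g * (h : G) * g⁻¹, conj_mem g h⟩
      map_one' := by ext; simp
      map_mul' := fun a b => by ext; simp only [Subgroup.coe_mul, MulMemClass.mk_mul_mk]; group }
  have hϕcoe : ∀ (g : G) (h : H), ((ϕ g h : H) : G) = g * (h : G) * g⁻¹ := fun g h => rfl
  have hcoc : ∀ k k' : K, ψ (k * k') = ϕ (k : G) (ψ k') * ψ k := by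
    intro k k'
    apply huniq
    calc ((ψ (k * k') : H) : G) • α₀ = ((k * k' : K) : G) • α₀ := hψ (k * k')
      _ = ((k : G) * (k' : G)) • α₀ := by rw [Subgroup.coe_mul]
      _ = (k : G) • ((k' : G) • α₀) := mul_smul _ _ _
      _ = (k : G) • ((ψ k' : G) • α₀) := by rw [hψ k']
      _ = ((k : G) * (ψ k' : G) * (k : G)⁻¹) • ((k : G) • α₀) := by
            simp only [← mul_smul]; congr 1; group
      _ = ((k : G) * (ψ k' : G) * (k : G)⁻¹) • ((ψ k : G) • α₀) := by rw [hψ k]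
      _ = ((ϕ (k : G) (ψ k') * ψ k : H) : G) • α₀ := by
            simp only [Subgroup.coe_mul, hϕcoe, ← mul_smul]
  haveI : Fintype K := Fintype.ofFinite K
  let σ : H := ∏ k : K, ψ k
  have hσ : ∀ k : K, σ = ϕ (k : G) σ * ψ k ^ Fintype.card K := by
    intro k
    have h1 : σ = ∏ k' : K, ψ (k * k') :=
      (Fintype.prod_equiv (Equiv.mulLeft k) _ _ fun k' => rfl).symm
    conv_lhs => rw [h1, Finset.prod_congr rfl fun k' _ => hcoc k k', Finset.prod_mul_distrib,
      ← map_prod, Finset.prod_const, Finset.card_univ]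
  have hind : H.index = Fintype.card K := by
    have h1 := hK.card_mul
    have h2 := H.card_mul_index
    rw [Nat.card_eq_fintype_card (α := K)] at h1
    exact Nat.eq_of_mul_eq_mul_left Nat.card_pos (h2.trans h1.symm)
  have hcop' : (Nat.card H).Coprime (Fintype.card K) := hind ▸ hcop
  set h₀ : H := (powCoprime hcop').symm σ with hh₀def
  have hh₀ : h₀ ^ Fintype.card K = σ := by
    have := (powCoprime hcop').apply_symm_apply σ
    rwa [powCoprime_apply] at this
  have hkey : ∀ k : K, ψ k = h₀ * (ϕ (k : G) h₀)⁻¹ := by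
    intro k
    apply (powCoprime hcop').injective
    rw [powCoprime_apply, powCoprime_apply, mul_pow, inv_pow, hh₀, ← map_pow, hh₀,
      eq_mul_inv_iff_mul_eq, mul_comm]
    exact (hσ k).symm
  refine ⟨(h₀ : G) • α₀, ?_⟩
  have hKle : K ≤ MulAction.stabilizer G ((h₀ : G) • α₀) := by
    intro k hk
    have hcalc : k • (h₀ : G) • α₀ = (h₀ : G) • α₀ := by
      calc k • (h₀ : G) • α₀ = ((k * (h₀ : G) * k⁻¹) * k) • α₀ := by
            simp only [← mul_smul]; congr 1; group
        _ = ((ϕ k h₀ : H) : G) • ((k : G) • α₀) := by rw [hϕcoe, mul_smul]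
        _ = ((ϕ k h₀ : H) : G) • ((ψ ⟨k, hk⟩ : G) • α₀) := by rw [hψ ⟨k, hk⟩]
        _ = ((ϕ k h₀ * ψ ⟨k, hk⟩ : H) : G) • α₀ := by rw [Subgroup.coe_mul, mul_smul]
        _ = ((ϕ k h₀ * (h₀ * (ϕ k h₀)⁻¹) : H) : G) • α₀ := by rw [hkey ⟨k, hk⟩]
        _ = (h₀ : G) • α₀ := by
              congr 1
              rw [mul_comm (h₀ : H), ← mul_assoc, mul_inv_cancel, one_mul]
    exact hcalc
  have hst : IsComplement' H (MulAction.stabilizer G ((h₀ : G) • α₀)) :=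
    Subgroup.isComplement'_stabilizer_of_coprime hcop
  apply aux_eq_of_le_of_card_le hKle
  have h1 := hst.card_mul
  have h2 := hK.card_mul
  exact le_of_eq (Nat.eq_of_mul_eq_mul_left Nat.card_pos (h1.trans h2.symm))

lemma abelian_conj {G : Type u} [Group G] [Finite G]
    {H K₁ K₂ : Subgroup G} [H.Normal] [IsMulCommutative H]
    (hcop : Nat.Coprime (Nat.card H) H.index)
    (h₁ : IsComplement' H K₁) (h₂ : IsComplement' H K₂) :
    ∃ g : G, K₂ = Subgroup.map (MulAut.conj g).toMonoidHom K₁ := by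
  obtain ⟨α, hα⟩ := abelian_key hcop h₁
  obtain ⟨β, hβ⟩ := abelian_key hcop h₂
  obtain ⟨h, hh⟩ := Subgroup.exists_smul_eq hcop α β
  refine ⟨(h : G), ?_⟩
  rw [← hβ, ← hh, Subgroup.smul_def, MulAction.stabilizer_smul_eq_stabilizer_map_conj, hα]

lemma aux_card_map_mul {G : Type u} {G' : Type v} [Group G] [Group G'] [Finite G]
    (f : G →* G') (X : Subgroup G) :
    Nat.card (X.map f) * Nat.card (f.ker ⊓ X : Subgroup G) = Nat.card X := by
  classical
  let f' := f.comp X.subtype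
  have hrange : f'.range = X.map f := by
    rw [MonoidHom.range_comp, Subgroup.range_subtype]
  have hker2 : f'.ker = (f.ker ⊓ X).subgroupOf X := by
    ext x
    simp [f', MonoidHom.mem_ker, Subgroup.mem_subgroupOf, x.2]
  have h1 : Nat.card X = Nat.card (X ⧸ f'.ker) * Nat.card f'.ker :=
    Subgroup.card_eq_card_quotient_mul_card_subgroup f'.ker
  have h2 : Nat.card (X ⧸ f'.ker) = Nat.card (X.map f) := by
    rw [← hrange]
    exact Nat.card_congr (QuotientGroup.quotientKerEquivRange f').toEquiv
  have h3 : Nat.card f'.ker = Nat.card (f.ker ⊓ X : Subgroup G) := by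
    rw [hker2, aux_card_subgroupOf inf_le_right]
  rw [h1, h2, h3]

lemma aux_card_lt {G : Type u} [Group G] [Finite G] {X P : Subgroup G} (h : X < P) :
    Nat.card X < Nat.card P := by
  have h2 : Nat.card ((X : Set G)) < Nat.card ((P : Set G)) := by
    rw [Nat.card_coe_set_eq, Nat.card_coe_set_eq]
    exact Set.ncard_lt_ncard (SetLike.coe_ssubset_coe.mpr h) (Set.toFinite _)
  exact h2

lemma aux_isComplement'_subgroupOf {G : Type u} [Group G] [Finite G] {H' X P : Subgroup G}
    [H'.Normal] (hsup : X ⊔ H' = P) (hdisj : Disjoint H' X) :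
    IsComplement' (H'.subgroupOf P) (X.subgroupOf P) := by
  have hH'P : H' ≤ P := hsup ▸ le_sup_right
  have hXP : X ≤ P := hsup ▸ le_sup_left
  apply Subgroup.isComplement'_of_card_mul_and_disjoint
  · rw [aux_card_subgroupOf hH'P, aux_card_subgroupOf hXP]
    have he : Nat.card (X × H') = Nat.card P := by
      apply Nat.card_congr
      refine Equiv.ofBijective (fun p => ⟨(p.1 : G) * (p.2 : G), ?_⟩) ⟨?_, ?_⟩
      · exact mul_mem (hXP p.1.2) (hH'P p.2.2)
      · rintro ⟨x, h⟩ ⟨x', h'⟩ he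
        have he' : (x : G) * h = (x' : G) * h' := congrArg Subtype.val he
        have hx : (x' : G)⁻¹ * x = (h' : G) * (h : G)⁻¹ := by
          rw [inv_mul_eq_iff_eq_mul, ← mul_assoc, ← he', mul_inv_cancel_right]
        have h1 : (x' : G)⁻¹ * x = 1 :=
          Subgroup.disjoint_def.mp hdisj (hx ▸ mul_mem h'.2 (inv_mem h.2))
            (mul_mem (inv_mem x'.2) x.2)
        have hxx : (x' : G) = x := inv_mul_eq_one.mp h1
        rw [← hxx] at he'
        simp only [Prod.mk.injEq]
        exact ⟨Subtype.ext hxx.symm, Subtype.ext (mul_left_cancel he')⟩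
      · rintro ⟨p, hp⟩
        have : p ∈ (X : Set G) * (H' : Set G) := by
          rw [← Subgroup.mul_normal X H', hsup]; exact hp
        obtain ⟨x, hx, h, hh, rfl⟩ := this
        exact ⟨(⟨x, hx⟩, ⟨h, hh⟩), rfl⟩
    rw [← he, Nat.card_prod, mul_comm]
  · rw [Subgroup.disjoint_def]
    intro x hx1 hx2
    have := Subgroup.disjoint_def.mp hdisj (Subgroup.mem_subgroupOf.mp hx1)
      (Subgroup.mem_subgroupOf.mp hx2)
    exact Subtype.ext this

lemma conj_of_isComplement' :
    ∀ (n : ℕ) {G : Type u} [Group G] [Finite G] [Group.IsSolvable G]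
      (H K₁ K₂ : Subgroup G) [H.Normal],
      Nat.card H ≤ n →
      Nat.Coprime (Nat.card H) H.index →
      IsComplement' H K₁ → IsComplement' H K₂ →
      ∃ g : G, K₂ = Subgroup.map (MulAut.conj g).toMonoidHom K₁ := by
  intro n
  induction n with
  | zero =>
    intro G _ _ _ H K₁ K₂ _ hn
    exact absurd hn (by simpa using Nat.card_pos.ne')
  | succ n ih =>
    intro G _ _ _ H K₁ K₂ _ hn hcop h₁ h₂
    by_cases hab : ⁅H, H⁆ = ⊥
    · haveI : IsMulCommutative H := by
        constructor; constructor
        intro a b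
        have hm : ⁅(a : G), (b : G)⁆ ∈ (⊥ : Subgroup G) :=
          hab ▸ Subgroup.commutator_mem_commutator a.2 b.2
        have hc := commutatorElement_eq_one_iff_commute.mp (Subgroup.mem_bot.mp hm)
        exact Subtype.ext hc
      exact abelian_conj hcop h₁ h₂
    · set H' : Subgroup G := ⁅H, H⁆ with hH'def
      haveI : H'.Normal := Subgroup.commutator_normal H H
      have hle : H' ≤ H := Subgroup.commutator_le_left H H
      have hne : H' ≠ H := by
        intro he
        haveI : Nontrivial H := by
          rcases Subgroup.bot_or_nontrivial H with hbot | hnt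
          · exact absurd (le_bot_iff.mp (hbot ▸ hle)) hab
          · exact hnt
        have hmap : Subgroup.map H.subtype (commutator H) = H' := by
          rw [_root_.commutator_def, Subgroup.map_commutator, ← MonoidHom.range_eq_map,
            Subgroup.range_subtype]
        have htop : commutator ↥H = ⊤ := by
          apply Subgroup.map_injective H.subtype_injective
          rw [hmap, he, ← MonoidHom.range_eq_map, Subgroup.range_subtype]
        exact aux_commutator_ne_top H htop
      have hlt : Nat.card H' < Nat.card H := aux_card_lt (lt_of_le_of_ne hle hne)
      -- quotient setup
      set π : G →* G ⧸ H' := QuotientGroup.mk' H' with hπdef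
      have hπs : Function.Surjective π := QuotientGroup.mk'_surjective H'
      have hker : π.ker = H' := QuotientGroup.ker_mk' H'
      haveI : (H.map π).Normal := Subgroup.Normal.map ‹H.Normal› π hπs
      haveI : IsMulCommutative (H.map π) := by
        constructor; constructor
        rintro ⟨a, ha⟩ ⟨b, hb⟩
        obtain ⟨x, hx, rfl⟩ := Subgroup.mem_map.mp ha
        obtain ⟨y, hy, rfl⟩ := Subgroup.mem_map.mp hb
        apply Subtype.ext
        apply commutatorElement_eq_one_iff_commute.mp
        show ⁅π x, π y⁆ = 1
        rw [← map_commutatorElement]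
        exact (QuotientGroup.eq_one_iff _).mpr (Subgroup.commutator_mem_commutator hx hy)
      have hcard_mapH : Nat.card (H.map π) * Nat.card H' = Nat.card H := by
        have h0 := aux_card_map_mul π H
        rwa [hker, inf_of_le_left hle] at h0
      have hcard_mapK : ∀ K : Subgroup G, IsComplement' H K →
          Nat.card (K.map π) = Nat.card K := by
        intro K hcomp
        have h0 : π.ker ⊓ K = ⊥ := by
          rw [hker]
          exact (hcomp.disjoint.mono_left hle).eq_bot
        have h1 := aux_card_map_mul π K
        rwa [h0, Subgroup.card_bot, mul_one] at h1
      have hcompQ : ∀ K : Subgroup G, IsComplement' H K →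
          IsComplement' (H.map π) (K.map π) := by
        intro K hcomp
        apply Subgroup.isComplement'_of_card_mul_and_disjoint
        · have hpos : 0 < Nat.card H' := Nat.card_pos
          apply Nat.eq_of_mul_eq_mul_right hpos
          have hQ : Nat.card (G ⧸ H') * Nat.card H' = Nat.card G :=
            (Subgroup.card_eq_card_quotient_mul_card_subgroup H').symm
          calc Nat.card (H.map π) * Nat.card (K.map π) * Nat.card H'
              = Nat.card (H.map π) * Nat.card H' * Nat.card (K.map π) := by ring
            _ = Nat.card H * Nat.card K := by rw [hcard_mapH, hcard_mapK K hcomp]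
            _ = Nat.card G := hcomp.card_mul
            _ = Nat.card (G ⧸ H') * Nat.card H' := hQ.symm
        · rw [Subgroup.disjoint_def]
          rintro x hx hk
          obtain ⟨h, hh, rfl⟩ := Subgroup.mem_map.mp hx
          obtain ⟨k, hk', hkx⟩ := Subgroup.mem_map.mp hk
          have hmem : h⁻¹ * k ∈ H' := by
            rw [← hker]
            show π (h⁻¹ * k) = 1
            rw [map_mul, map_inv, hkx, inv_mul_cancel]
          have hkH : k ∈ H := by
            have : h * (h⁻¹ * k) ∈ H := mul_mem hh (hle hmem)
            rwa [mul_inv_cancel_left] at this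
          have hk1 : k = 1 := Subgroup.disjoint_def.mp hcomp.disjoint hkH hk'
          rw [← hkx, hk1, map_one]
      have hindH : H.index = Nat.card K₂ := h₂.symm.index_eq_card
      have hcopQ : Nat.Coprime (Nat.card (H.map π)) (H.map π).index := by
        have hind : (H.map π).index = Nat.card (K₂.map π) := (hcompQ K₂ h₂).symm.index_eq_card
        rw [hind, hcard_mapK K₂ h₂, ← hindH]
        exact Nat.Coprime.coprime_dvd_left ⟨Nat.card H', hcard_mapH.symm⟩ hcop
      obtain ⟨gq, hgq⟩ := abelian_conj hcopQ (hcompQ K₁ h₁) (hcompQ K₂ h₂)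
      obtain ⟨g, rfl⟩ := hπs gq
      -- transfer back
      set L : Subgroup G := K₁.map (MulAut.conj g).toMonoidHom with hLdef
      have hsquare : π.comp (MulAut.conj g).toMonoidHom
          = (MulAut.conj (π g)).toMonoidHom.comp π := by
        ext x
        simp [MulAut.conj_apply]
      have hLmap : L.map π = K₂.map π := by
        rw [hLdef, Subgroup.map_map, hsquare, ← Subgroup.map_map, ← hgq]
      have hPeq : L ⊔ H' = K₂ ⊔ H' := by
        have h1 : Subgroup.comap π (L.map π) = L ⊔ H' := by
          rw [Subgroup.comap_map_eq, hker]
        have h2 : Subgroup.comap π (K₂.map π) = K₂ ⊔ H' := by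
          rw [Subgroup.comap_map_eq, hker]
        rw [← h1, hLmap, h2]
      set P : Subgroup G := K₂ ⊔ H' with hPdef
      have hK₂P : K₂ ≤ P := le_sup_left
      have hLP : L ≤ P := by rw [← hPeq]; exact le_sup_left
      have hH'P : H' ≤ P := le_sup_right
      have hdisjK₂ : Disjoint H' K₂ := h₂.disjoint.mono_left hle
      have hdisjL : Disjoint H' L := by
        rw [Subgroup.disjoint_def]
        intro x hx1 hx2
        obtain ⟨k, hk, rfl⟩ := Subgroup.mem_map.mp hx2
        have hgk : g * k * g⁻¹ ∈ H := by
          have := hle hx1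
          simpa [MulAut.conj_apply] using this
        have hkH : k ∈ H := by
          have hmem2 : g⁻¹ * (g * k * g⁻¹) * g⁻¹⁻¹ ∈ H :=
            (‹H.Normal› : H.Normal).conj_mem _ hgk g⁻¹
          have hsimp : g⁻¹ * (g * k * g⁻¹) * g⁻¹⁻¹ = k := by group
          rwa [hsimp] at hmem2
        have : k = 1 := Subgroup.disjoint_def.mp h₁.disjoint hkH hk
        rw [this, map_one]
      have hcomp2 : IsComplement' (H'.subgroupOf P) (K₂.subgroupOf P) :=
        aux_isComplement'_subgroupOf rfl hdisjK₂
      have hcomp1 : IsComplement' (H'.subgroupOf P) (L.subgroupOf P) :=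
        aux_isComplement'_subgroupOf hPeq hdisjL
      haveI : (H'.subgroupOf P).Normal := Subgroup.normal_subgroupOf
      have hcardP : Nat.card (H'.subgroupOf P) ≤ n := by
        rw [aux_card_subgroupOf hH'P]; omega
      have hcop' : Nat.Coprime (Nat.card (H'.subgroupOf P)) (H'.subgroupOf P).index := by
        rw [aux_card_subgroupOf hH'P]
        have hind : (H'.subgroupOf P).index = Nat.card (K₂.subgroupOf P) :=
          hcomp2.symm.index_eq_card
        rw [hind, aux_card_subgroupOf hK₂P, ← hindH]
        exact Nat.Coprime.coprime_dvd_left (Subgroup.card_dvd_of_le hle) hcop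
      obtain ⟨p, hp⟩ := ih (H'.subgroupOf P) (L.subgroupOf P) (K₂.subgroupOf P)
        hcardP hcop' hcomp1 hcomp2
      refine ⟨(p : G) * g, ?_⟩
      have hK₂eq : (K₂.subgroupOf P).map P.subtype = K₂ := by
        rw [Subgroup.subgroupOf_map_subtype, inf_of_le_left hK₂P]
      have hLeq : (L.subgroupOf P).map P.subtype = L := by
        rw [Subgroup.subgroupOf_map_subtype, inf_of_le_left hLP]
      have hcomm2 : P.subtype.comp (MulAut.conj p).toMonoidHom
          = (MulAut.conj (p : G)).toMonoidHom.comp P.subtype := by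
        ext x
        simp [MulAut.conj_apply]
      have hfinal := congrArg (Subgroup.map P.subtype) hp
      rw [hK₂eq, Subgroup.map_map, hcomm2, ← Subgroup.map_map, hLeq] at hfinal
      rw [hfinal, hLdef, Subgroup.map_map]
      congr 1
      ext x
      simp [MulAut.conj_apply, mul_assoc]


open SemidirectProduct

/-- For nilpotent `J = J_q × J'_q` acting on a finite `q`-group `N`, any crossed
homomorphism `φ : J_q → N` whose class is fixed by the `J'_q`-action extends (up to
cohomology) to a crossed homomorphism `J → N`; in particular
`res : H¹(J, N) → H¹(J_q, N)^{J'_q}` is surjective. -/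
theorem stmt_17 {Jq Jq' N : Type*} [Group Jq] [Group Jq'] [Group N]
    [Finite Jq] [Finite Jq'] [Finite N]
    (q : ℕ) (hq : q.Prime) (hJq : IsPGroup q Jq) (hJq' : ¬ q ∣ Nat.card Jq')
    [Group.IsNilpotent Jq'] (hN : IsPGroup q N)
    (φ : Jq × Jq' →* MulAut N) (f : Jq → N)
    (hf : IsCocycle (φ.comp (MonoidHom.inl Jq Jq')) f)
    (hinv : ∀ j' : Jq', Cohomologous (φ.comp (MonoidHom.inl Jq Jq'))
      (fun x => φ (1, j') (f x)) f) :
    ∃ F : Jq × Jq' → N, IsCocycle φ F ∧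
      Cohomologous (φ.comp (MonoidHom.inl Jq Jq')) (fun x => F (x, 1)) f := by
  classical
  haveI : Fact q.Prime := ⟨hq⟩
  set φ₂ : Jq' →* MulAut N := φ.comp (MonoidHom.inr Jq Jq') with hφ₂def
  -- basic commutation facts
  have hmul1 : ∀ (j₁ j₂ : Jq') (n : N), φ (1, j₁ * j₂) n = φ (1, j₁) (φ (1, j₂) n) := by
    intro j₁ j₂ n
    have h : ((1, j₁ * j₂) : Jq × Jq') = (1, j₁) * (1, j₂) := by
      rw [Prod.mk_mul_mk, one_mul]
    rw [h, map_mul, MulAut.mul_apply]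
  have hmulx : ∀ (x y : Jq) (n : N), φ (x * y, 1) n = φ (x, 1) (φ (y, 1) n) := by
    intro x y n
    have h : ((x * y, 1) : Jq × Jq') = (x, 1) * (y, 1) := by
      rw [Prod.mk_mul_mk, one_mul]
    rw [h, map_mul, MulAut.mul_apply]
  have hsplit : ∀ (x : Jq) (j : Jq') (n : N), φ (x, j) n = φ (x, 1) (φ (1, j) n) := by
    intro x j n
    have h : ((x, j) : Jq × Jq') = (x, 1) * (1, j) := by
      rw [Prod.mk_mul_mk, mul_one, one_mul]
    rw [h, map_mul, MulAut.mul_apply]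
  have hcommφ : ∀ (x : Jq) (j : Jq') (n : N), φ (1, j) (φ (x, 1) n) = φ (x, 1) (φ (1, j) n) := by
    intro x j n
    have h1 : φ (1, j) * φ (x, 1) = φ (x, 1) * φ (1, j) := by
      rw [← map_mul, ← map_mul, Prod.mk_mul_mk, Prod.mk_mul_mk, one_mul, mul_one,
        one_mul, mul_one]
    have h2 := congrArg (fun a : MulAut N => a n) h1
    simpa [MulAut.mul_apply] using h2
  -- the semidirect product and its action on maps Jq → N
  let Γ := N ⋊[φ₂] Jq'
  let act : Γ → (Jq → N) → (Jq → N) :=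
    fun γ g x => γ.left * φ (1, γ.right) (g x) * (φ (x, 1) γ.left)⁻¹
  have hφ₂app : ∀ (j : Jq') (n : N), φ₂ j n = φ (1, j) n := fun j n => rfl
  have act_one : ∀ g, act 1 g = g := by
    intro g; funext x
    show (1 : Γ).left * φ (1, (1 : Γ).right) (g x) * (φ (x, 1) (1 : Γ).left)⁻¹ = g x
    rw [SemidirectProduct.one_left, SemidirectProduct.one_right, Prod.mk_one_one,
      map_one, MulAut.one_apply, map_one, one_mul, inv_one, mul_one]
  have act_mul : ∀ γ₁ γ₂ g, act (γ₁ * γ₂) g = act γ₁ (act γ₂ g) := by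
    intro γ₁ γ₂ g; funext x
    show (γ₁ * γ₂).left * φ (1, (γ₁ * γ₂).right) (g x) * (φ (x, 1) (γ₁ * γ₂).left)⁻¹
      = γ₁.left * φ (1, γ₁.right)
          (γ₂.left * φ (1, γ₂.right) (g x) * (φ (x, 1) γ₂.left)⁻¹)
        * (φ (x, 1) γ₁.left)⁻¹
    rw [SemidirectProduct.mul_left, SemidirectProduct.mul_right, hφ₂app, hmul1,
      map_mul, map_mul, map_inv, hcommφ, map_mul, mul_inv_rev]
    group
  -- subgroup of elements fixing f
  let Γ₀ : Subgroup Γ :=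
    { carrier := {γ | act γ f = f}
      one_mem' := act_one f
      mul_mem' := fun {a} {b} ha hb => by
        show act (a * b) f = f
        rw [act_mul, hb, ha]
      inv_mem' := fun {a} ha => by
        show act a⁻¹ f = f
        conv_lhs => rw [← ha]
        rw [← act_mul, inv_mul_cancel, act_one] }
  have hmemΓ₀ : ∀ γ : Γ, γ ∈ Γ₀ ↔ act γ f = f := fun γ => Iff.rfl
  -- N-hat and A
  set Nhat : Subgroup Γ := (rightHom : Γ →* Jq').ker with hNhatdef
  set A : Subgroup Γ := (inr : Jq' →* Γ).range with hAdef
  haveI : Finite Γ := Finite.of_injective (fun γ : Γ => (γ.left, γ.right))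
    (by
      rintro ⟨a1, a2⟩ ⟨b1, b2⟩ h
      simp only [Prod.mk.injEq] at h
      exact SemidirectProduct.ext h.1 h.2)
  haveI : Group.IsSolvable N := by
    haveI := hN.isNilpotent
    infer_instance
  haveI : Group.IsSolvable Jq' := inferInstance
  haveI : Group.IsSolvable Γ :=
    solvable_of_ker_le_range inl rightHom (le_of_eq range_inl_eq_ker_rightHom.symm)
  have hcardΓ : Nat.card Γ = Nat.card N * Nat.card Jq' := by
    rw [← Nat.card_prod]
    exact Nat.card_congr ⟨fun γ => (γ.left, γ.right), fun p => ⟨p.1, p.2⟩,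
      fun γ => rfl, fun p => rfl⟩
  have hcardN : Nat.card Nhat = Nat.card N := by
    rw [hNhatdef, ← range_inl_eq_ker_rightHom]
    exact (Nat.card_congr (Equiv.ofBijective ((inl : N →* Γ).rangeRestrict)
      ⟨fun a b h => inl_injective (congrArg Subtype.val h),
        MonoidHom.rangeRestrict_surjective _⟩)).symm
  have hcardA : Nat.card A = Nat.card Jq' := by
    rw [hAdef]
    exact (Nat.card_congr (Equiv.ofBijective ((inr : Jq' →* Γ).rangeRestrict)
      ⟨fun a b h => inr_injective (congrArg Subtype.val h),
        MonoidHom.rangeRestrict_surjective _⟩)).symm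
  have hcompA : IsComplement' Nhat A := by
    apply Subgroup.isComplement'_of_card_mul_and_disjoint
    · rw [hcardN, hcardA, hcardΓ]
    · rw [Subgroup.disjoint_def]
      rintro x hx ⟨j, rfl⟩
      have : j = 1 := by
        have := hx
        exact (rightHom_inr (φ := φ₂) j).symm.trans this
      rw [this, map_one]
  have hcopNhat : Nat.Coprime (Nat.card Nhat) Nhat.index := by
    have hind : Nhat.index = Nat.card Jq' := by
      rw [hcompA.symm.index_eq_card, hcardA]
    obtain ⟨k, hk⟩ := IsPGroup.exists_card_eq hN
    rw [hind, hcardN, hk]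
    exact Nat.Coprime.pow_left k ((hq.coprime_iff_not_dvd).mpr hJq')
  -- Γ₀ hits every Jq' component
  have hΓ₀ : ∀ j' : Jq', ∃ n : N, (⟨n, j'⟩ : Γ) ∈ Γ₀ := by
    intro j'
    obtain ⟨n, hn⟩ := hinv j'
    refine ⟨n⁻¹, ?_⟩
    rw [hmemΓ₀]
    funext x
    show n⁻¹ * φ (1, j') (f x) * (φ (x, 1) n⁻¹)⁻¹ = f x
    rw [map_inv, inv_inv]
    exact (hn x).symm
  have hfact : ∀ γ : Γ, ∃ ν ∈ Nhat, ∃ γ₀ ∈ Γ₀, γ = ν * γ₀ := by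
    intro γ
    obtain ⟨n, hn⟩ := hΓ₀ γ.right
    refine ⟨γ * (⟨n, γ.right⟩ : Γ)⁻¹, ?_, ⟨n, γ.right⟩, hn, by group⟩
    show rightHom (γ * (⟨n, γ.right⟩ : Γ)⁻¹) = 1
    rw [map_mul, map_inv]
    show γ.right * ((⟨n, γ.right⟩ : Γ).right)⁻¹ = 1
    rw [mul_inv_cancel]
  -- build complement B inside Γ₀
  set M : Subgroup ↥Γ₀ := Nhat.subgroupOf Γ₀ with hMdef
  haveI : M.Normal := Subgroup.normal_subgroupOf
  have hcardM : Nat.card M = Nat.card (Nhat ⊓ Γ₀ : Subgroup Γ) := by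
    have h0 := Subgroup.subgroupOf_map_subtype Nhat Γ₀
    rw [← h0]
    exact Nat.card_congr (Subgroup.equivMapOfInjective M Γ₀.subtype
      Γ₀.subtype_injective).toEquiv
  have hcopM : Nat.Coprime (Nat.card M) M.index := by
    have h1 : Nat.card M ∣ Nat.card Nhat := by
      rw [hcardM]; exact Subgroup.card_dvd_of_le inf_le_left
    have h2 : M.index ∣ Nhat.index := Subgroup.relIndex_dvd_index_of_normal Nhat Γ₀
    exact Nat.Coprime.coprime_dvd_left h1 (Nat.Coprime.coprime_dvd_right h2 hcopNhat)
  obtain ⟨K, hK⟩ := Subgroup.exists_right_complement'_of_coprime hcopM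
  set B : Subgroup Γ := K.map Γ₀.subtype with hBdef
  have hBle : B ≤ Γ₀ := Subgroup.map_subtype_le K
  -- index of M in Γ₀ equals index of Nhat
  set ψ : ↥Γ₀ →* Γ ⧸ Nhat := (QuotientGroup.mk' Nhat).comp Γ₀.subtype with hψdef
  have hψsurj : Function.Surjective ψ := by
    intro y
    obtain ⟨γ, rfl⟩ := QuotientGroup.mk'_surjective Nhat y
    obtain ⟨ν, hν, γ₀, hγ₀, rfl⟩ := hfact γ
    refine ⟨⟨γ₀, hγ₀⟩, ?_⟩
    show ((γ₀ : Γ) : Γ ⧸ Nhat) = ((ν * γ₀ : Γ) : Γ ⧸ Nhat)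
    apply (QuotientGroup.eq).mpr
    have : γ₀⁻¹ * (ν * γ₀) = γ₀⁻¹ * ν * γ₀⁻¹⁻¹ := by rw [inv_inv, mul_assoc]
    rw [this]
    exact (inferInstance : Nhat.Normal).conj_mem ν hν γ₀⁻¹
  have hψker : ψ.ker = M := by
    ext x
    simp [hψdef, MonoidHom.mem_ker, hMdef, Subgroup.mem_subgroupOf,
      QuotientGroup.eq_one_iff]
  have hindM : M.index = Nhat.index := by
    have h1 : M.index = Nat.card (↥Γ₀ ⧸ M) := rfl
    have h2 : Nat.card (↥Γ₀ ⧸ M) = Nat.card (Γ ⧸ Nhat) := by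
      rw [← hψker]
      exact Nat.card_congr (QuotientGroup.quotientKerEquivOfSurjective ψ hψsurj).toEquiv
    rw [h1, h2]; rfl
  have hcardB : Nat.card B = Nhat.index := by
    have h1 : Nat.card B = Nat.card K :=
      (Nat.card_congr (Subgroup.equivMapOfInjective K Γ₀.subtype
        Γ₀.subtype_injective).toEquiv).symm
    rw [h1, ← hK.symm.index_eq_card, hindM]
  have hcompB : IsComplement' Nhat B := by
    apply Subgroup.isComplement'_of_card_mul_and_disjoint
    · rw [hcardB, Subgroup.card_mul_index]
    · rw [Subgroup.disjoint_def]
      rintro x hx1 hx2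
      obtain ⟨k, hk, rfl⟩ := Subgroup.mem_map.mp hx2
      have : k ∈ M := by
        rw [hMdef, Subgroup.mem_subgroupOf]; exact hx1
      have hk1 : k = 1 := Subgroup.disjoint_def.mp hK.disjoint this hk
      rw [hk1, map_one]
  -- conjugate B to A
  obtain ⟨g, hg⟩ := conj_of_isComplement' (Nat.card Nhat) Nhat B A le_rfl
    hcopNhat hcompB hcompA
  obtain ⟨ν, hν, γ₀, hγ₀, hgfact⟩ := hfact g
  set F₀ : Jq → N := act ν f with hF₀def
  have hγ₀f : act γ₀ f = f := hγ₀
  have hgf : act g f = F₀ := by rw [hgfact, act_mul, hγ₀f]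
  have hfix : ∀ j' : Jq', act (inr j') F₀ = F₀ := by
    intro j'
    have hmem : (inr j' : Γ) ∈ A := ⟨j', rfl⟩
    rw [hg] at hmem
    obtain ⟨b, hb, hbe⟩ := Subgroup.mem_map.mp hmem
    have hbΓ₀ : act b f = f := hBle hb
    have hbe' : g * b * g⁻¹ = inr j' := by
      have := hbe
      simpa [MulAut.conj_apply] using this
    rw [← hgf, ← hbe']
    calc act (g * b * g⁻¹) (act g f) = act (g * b * g⁻¹ * g) f := (act_mul _ _ _).symm
      _ = act (g * b) f := by rw [inv_mul_cancel_right]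
      _ = act g (act b f) := act_mul _ _ _
      _ = act g f := by rw [hbΓ₀]
  have hfix' : ∀ (j₂ : Jq') (x : Jq), φ (1, j₂) (F₀ x) = F₀ x := by
    intro j₂ x
    have h0 := congrFun (hfix j₂) x
    have h1 : act (inr j₂) F₀ x
        = (inr j₂ : Γ).left * φ (1, (inr j₂ : Γ).right) (F₀ x)
          * (φ (x, 1) (inr j₂ : Γ).left)⁻¹ := rfl
    rw [h1, SemidirectProduct.left_inr, SemidirectProduct.right_inr, map_one,
      one_mul, inv_one, mul_one] at h0
    exact h0
  have hνright : ν.right = 1 := hν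
  have hF₀x : ∀ x, F₀ x = ν.left * f x * (φ (x, 1) ν.left)⁻¹ := by
    intro x
    show ν.left * φ (1, ν.right) (f x) * (φ (x, 1) ν.left)⁻¹ = _
    rw [hνright, Prod.mk_one_one, map_one, MulAut.one_apply]
  have hfapp : ∀ x y : Jq, f (x * y) = f x * φ (x, 1) (f y) := by
    intro x y
    have := hf x y
    simpa using this
  have hcoc₀ : ∀ x y : Jq, F₀ (x * y) = F₀ x * φ (x, 1) (F₀ y) := by
    intro x y
    rw [hF₀x, hF₀x, hF₀x, hfapp x y, map_mul, map_mul, map_inv, hmulx]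
    have hc := hcommφ
    group
  refine ⟨fun p => F₀ p.1, ?_, ?_⟩
  · intro j j'
    show F₀ ((j * j').1) = F₀ j.1 * φ j (F₀ j'.1)
    have h1 : (j * j').1 = j.1 * j'.1 := rfl
    have h2 : φ j (F₀ j'.1) = φ (j.1, 1) (φ (1, j.2) (F₀ j'.1)) := hsplit j.1 j.2 _
    rw [h1, hcoc₀, h2, hfix']
  · refine ⟨ν.left, fun x => ?_⟩
    show f x = ν.left⁻¹ * F₀ x * φ (x, 1) ν.left
    rw [hF₀x]
    group
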